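/- Let V be a finite set of boxes with size function w : V → [0,1]^d, and suppose V can be partitioned into m parts V_1, …, V_m such that each (V_j, w) admits an orthogonal packing into the unit cube [0,1]^d. Then for all dual feasible functions u_1, …, u_d: ⌈∑_{b∈V} ∏_{i=1}^d u_i(w_i(b))⌉ ≤ m. In particular, the ceiling of the transformed total volume is a lower bound for the orthogonal bin packing instance (V,w) with unit-cube containers. -/

import Mathlib

/-- A function `u : [0,1] → [0,1]` is *dual feasible* if it maps `[0,1]` into `[0,1]`
and for every finite family `x₁, …, xₙ` of numbers in `[0,1]` with `∑ xⱼ ≤ 1`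
one has `∑ u (xⱼ) ≤ 1`. -/
def DualFeasible (u : ℝ → ℝ) : Prop :=
  (∀ x ∈ Set.Icc (0 : ℝ) 1, u x ∈ Set.Icc (0 : ℝ) 1) ∧
  ∀ (n : ℕ) (x : Fin n → ℝ), (∀ j, x j ∈ Set.Icc (0 : ℝ) 1) →
    ∑ j, x j ≤ 1 → ∑ j, u (x j) ≤ 1

namespace BinPackingAux

variable {V : Type*}

/-- `p`, `w` form an orthogonal packing of the boxes `V` into the unit cube. -/
def GoodPack {d : ℕ} (p w : V → Fin d → ℝ) : Prop :=
  (∀ b i, 0 ≤ p b i ∧ p b i + w b i ≤ 1) ∧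
  ∀ b c : V, b ≠ c → ∃ i, p b i + w b i ≤ p c i ∨ p c i + w c i ≤ p b i

/-- A chain of boxes along one axis, each ending before the next begins,
the last ending before `t`. -/
def IsChain (q v : V → ℝ) : List V → ℝ → Prop
  | [], _ => True
  | [a], t => q a + v a ≤ t
  | a :: b :: l, t => q a + v a ≤ q b ∧ IsChain q v (b :: l) t

lemma isChain_cons_sum (q v : V → ℝ) :
    ∀ (l : List V) (a : V) (t : ℝ), IsChain q v (a :: l) t →
      q a + ((a :: l).map v).sum ≤ t := by
  intro l
  induction l with
  | nil => intro a t h; simpa [IsChain] using h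
  | cons b l ih =>
    intro a t h
    obtain ⟨h1, h2⟩ := h
    have := ih b t h2
    simp only [List.map_cons, List.sum_cons] at this ⊢
    linarith

lemma isChain_append (q v : V → ℝ) (b : V) :
    ∀ (l : List V) (t : ℝ), IsChain q v l (q b) → q b + v b ≤ t →
      IsChain q v (l ++ [b]) t := by
  intro l
  induction l with
  | nil => intro t _ hb; simpa [IsChain] using hb
  | cons a l ih =>
    intro t h hb
    cases l with
    | nil => exact ⟨h, by simpa [IsChain] using hb⟩
    | cons c l' => exact ⟨h.1, ih t h.2 hb⟩

/-- Sums `∑ u (v a)` over chains ending before `t`. -/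
def chainSums (q v : V → ℝ) (u : ℝ → ℝ) (t : ℝ) : Set ℝ :=
  {s | ∃ l : List V, IsChain q v l t ∧ s = (l.map fun a => u (v a)).sum}

lemma zero_mem_chainSums (q v : V → ℝ) (u : ℝ → ℝ) (t : ℝ) :
    (0 : ℝ) ∈ chainSums q v u t :=
  ⟨[], trivial, by simp⟩

/-- Key estimate from dual feasibility: a chain sum plus `u x` is at most 1,
whenever the chain fits before `t` and `t + x ≤ 1`. -/
lemma chainSums_le (q v : V → ℝ) (hq : ∀ b, 0 ≤ q b)
    (hv : ∀ b, v b ∈ Set.Icc (0 : ℝ) 1)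
    {u : ℝ → ℝ} (hu : DualFeasible u) {t x : ℝ} (ht : 0 ≤ t) (htx : t + x ≤ 1)
    (hx : x ∈ Set.Icc (0 : ℝ) 1) :
    ∀ s ∈ chainSums q v u t, s + u x ≤ 1 := by
  rintro s ⟨l, hl, rfl⟩
  have hsum : ((l.map v).sum : ℝ) ≤ t := by
    cases l with
    | nil => simpa using ht
    | cons a l' =>
      have h := isChain_cons_sum q v l' a t hl
      have := hq a
      linarith
  -- package the chain widths together with `x` as a finite family
  set n := l.length with hn
  have key := hu.2 (n + 1) (Fin.snoc (fun j : Fin n => v (l.get j)) x) ?_ ?_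
  · rw [Fin.sum_univ_castSucc] at key
    simp only [Fin.snoc_castSucc, Fin.snoc_last] at key
    have hmap : (l.map fun a => u (v a)).sum = ∑ j : Fin n, u (v (l.get j)) := by
      conv_lhs => rw [← List.ofFn_get l]
      rw [List.map_ofFn, List.sum_ofFn]
      rfl
    rw [hmap]
    exact key
  · intro j
    refine Fin.lastCases ?_ (fun i => ?_) j
    · simpa using hx
    · simpa using hv (l.get i)
  · rw [Fin.sum_univ_castSucc]
    simp only [Fin.snoc_castSucc, Fin.snoc_last]
    have hmap : (l.map v).sum = ∑ j : Fin n, v (l.get j) := by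
      conv_lhs => rw [← List.ofFn_get l]
      rw [List.map_ofFn, List.sum_ofFn]
      rfl
    rw [← hmap]
    linarith

lemma chainSums_extend (q v : V → ℝ) (u : ℝ → ℝ) {t : ℝ} (b : V)
    {s : ℝ} (hs : s ∈ chainSums q v u (q b)) (hb : q b + v b ≤ t) :
    s + u (v b) ∈ chainSums q v u t := by
  obtain ⟨l, hl, rfl⟩ := hs
  exact ⟨l ++ [b], isChain_append q v b l t hl hb, by simp⟩

/-- **Transformation lemma** (Fekete–Schepers): applying a dual feasible function to one
coordinate of all boxes of a packing preserves packability. -/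
lemma transform {d : ℕ} {p w : V → Fin d → ℝ}
    (hw : ∀ b i, w b i ∈ Set.Icc (0 : ℝ) 1) (hpk : GoodPack p w)
    (k : Fin d) {u : ℝ → ℝ} (hu : DualFeasible u)
    (w' : V → Fin d → ℝ) (hw'k : ∀ b, w' b k = u (w b k))
    (hw'ne : ∀ b i, i ≠ k → w' b i = w b i) :
    ∃ p' : V → Fin d → ℝ, GoodPack p' w' := by
  classical
  obtain ⟨hbd, hsep⟩ := hpk
  set q : V → ℝ := fun b => p b k with hqdef
  set v : V → ℝ := fun b => w b k with hvdef
  have hq0 : ∀ b, 0 ≤ q b := fun b => (hbd b k).1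
  have hv : ∀ b, v b ∈ Set.Icc (0 : ℝ) 1 := fun b => hw b k
  have hqv : ∀ b, q b + v b ≤ 1 := fun b => (hbd b k).2
  have hle : ∀ b, ∀ s ∈ chainSums q v u (q b), s + u (v b) ≤ 1 := fun b =>
    chainSums_le q v hq0 hv hu (hq0 b) (hqv b) (hv b)
  have hbdd : ∀ b, BddAbove (chainSums q v u (q b)) := by
    intro b
    refine ⟨1, fun s hs => ?_⟩
    have := hle b s hs
    have := ((hu.1 (v b) (hv b))).1
    linarith
  have hne : ∀ b, (chainSums q v u (q b)).Nonempty :=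
    fun b => ⟨0, zero_mem_chainSums q v u (q b)⟩
  refine ⟨fun b i => if i = k then sSup (chainSums q v u (q b)) else p b i, ?_, ?_⟩
  · intro b i
    by_cases hik : i = k
    · subst hik
      simp only [eq_self_iff_true, if_true, hw'k]
      constructor
      · exact le_csSup (hbdd b) (zero_mem_chainSums q v u (q b))
      · have : sSup (chainSums q v u (q b)) ≤ 1 - u (v b) :=
          csSup_le (hne b) (fun s hs => by have := hle b s hs; linarith)
        linarith
    · simp only [if_neg hik, hw'ne b i hik]
      exact hbd b i
  · intro b c hbc
    obtain ⟨i, hi⟩ := hsep b c hbc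
    by_cases hik : i = k
    · subst hik
      refine ⟨i, ?_⟩
      simp only [eq_self_iff_true, if_true, hw'k]
      rcases hi with h | h
      · left
        have h1 : sSup (chainSums q v u (q b)) ≤ sSup (chainSums q v u (q c)) - u (v b) :=
          csSup_le (hne b) fun s hs => by
            have := le_csSup (hbdd c) (chainSums_extend q v u b hs h)
            linarith
        linarith
      · right
        have h1 : sSup (chainSums q v u (q c)) ≤ sSup (chainSums q v u (q b)) - u (v c) :=
          csSup_le (hne c) fun s hs => by
            have := le_csSup (hbdd b) (chainSums_extend q v u c hs h)
            linarith
        linarith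
    · exact ⟨i, by simp only [if_neg hik, hw'ne b i hik, hw'ne c i hik]; exact hi⟩

/-- Iterating the transformation lemma over all coordinates. -/
lemma transform_all {d : ℕ} {p w : V → Fin d → ℝ}
    (hw : ∀ b i, w b i ∈ Set.Icc (0 : ℝ) 1) (hpk : GoodPack p w)
    (u : Fin d → ℝ → ℝ) (hu : ∀ i, DualFeasible (u i)) :
    ∃ p' : V → Fin d → ℝ, GoodPack p' (fun b i => u i (w b i)) := by
  classical
  have main : ∀ k : ℕ, ∃ p' : V → Fin d → ℝ,
      GoodPack p' (fun b i => if (i : ℕ) < k then u i (w b i) else w b i) := by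
    intro k
    induction k with
    | zero => exact ⟨p, by simpa using hpk⟩
    | succ k ih =>
      obtain ⟨p', hp'⟩ := ih
      by_cases hkd : k < d
      · set wk : V → Fin d → ℝ := fun b i => if (i : ℕ) < k then u i (w b i) else w b i
          with hwk
        have hwk_Icc : ∀ b i, wk b i ∈ Set.Icc (0 : ℝ) 1 := by
          intro b i
          simp only [hwk]
          split
          · exact (hu i).1 _ (hw b i)
          · exact hw b i
        have hk1 : ∀ b, (if ((⟨k, hkd⟩ : Fin d) : ℕ) < k + 1
              then u ⟨k, hkd⟩ (w b ⟨k, hkd⟩) else w b ⟨k, hkd⟩)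
            = u ⟨k, hkd⟩ (wk b ⟨k, hkd⟩) := by
          intro b
          simp only [hwk]
          rw [if_pos (Nat.lt_succ_self k), if_neg (lt_irrefl k)]
        have hk2 : ∀ (b : V) (i : Fin d), i ≠ ⟨k, hkd⟩ →
            (if (i : ℕ) < k + 1 then u i (w b i) else w b i) = wk b i := by
          intro b i hik
          have hik' : (i : ℕ) ≠ k := fun h => hik (Fin.ext h)
          simp only [hwk]
          by_cases h : (i : ℕ) < k
          · rw [if_pos h, if_pos (Nat.lt_succ_of_lt h)]
          · rw [if_neg h,
              if_neg fun hh => h (Nat.lt_of_le_of_ne (Nat.lt_succ_iff.mp hh) hik')]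
        exact transform hwk_Icc hp' ⟨k, hkd⟩ (hu ⟨k, hkd⟩)
          (fun b i => if (i : ℕ) < k + 1 then u i (w b i) else w b i) hk1 hk2
      · refine ⟨p', ?_⟩
        have hEq : (fun (b : V) (i : Fin d) => if (i : ℕ) < k + 1 then u i (w b i) else w b i)
            = fun (b : V) (i : Fin d) => if (i : ℕ) < k then u i (w b i) else w b i := by
          funext b i
          have h1 : (i : ℕ) < k := lt_of_lt_of_le i.isLt (le_of_not_gt hkd)
          rw [if_pos h1, if_pos (Nat.lt_succ_of_lt h1)]
        rw [hEq]
        exact hp'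
  obtain ⟨p', hp'⟩ := main d
  refine ⟨p', ?_⟩
  have hEq : (fun (b : V) (i : Fin d) => if (i : ℕ) < d then u i (w b i) else w b i)
      = fun (b : V) (i : Fin d) => u i (w b i) := by
    funext b i
    rw [if_pos i.isLt]
  rw [← hEq]
  exact hp'

open MeasureTheory in
/-- Volume bound: the boxes of a packing into the unit cube have total volume at most 1. -/
lemma volume_bound [Fintype V] {d : ℕ} {p w : V → Fin d → ℝ}
    (hw0 : ∀ b i, 0 ≤ w b i) (hpk : GoodPack p w) :
    ∑ b : V, ∏ i, w b i ≤ 1 := by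
  classical
  obtain ⟨hbd, hsep⟩ := hpk
  set S : V → Set (Fin d → ℝ) :=
    fun b => Set.univ.pi fun i => Set.Ico (p b i) (p b i + w b i) with hS
  have hvol : ∀ b, volume (S b) = ENNReal.ofReal (∏ i, w b i) := by
    intro b
    rw [hS, volume_pi_pi, ENNReal.ofReal_prod_of_nonneg (fun i _ => hw0 b i)]
    congr 1 with i
    rw [Real.volume_Ico]
    ring_nf
  have hdisj : ((Finset.univ : Finset V) : Set V).PairwiseDisjoint S := by
    intro b _ c _ hbc
    refine Set.disjoint_left.2 fun x hxb hxc => ?_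
    obtain ⟨i, hi⟩ := hsep b c hbc
    have h1 := hxb i (Set.mem_univ i)
    have h2 := hxc i (Set.mem_univ i)
    simp only [Set.mem_Ico] at h1 h2
    rcases hi with h | h
    · exact absurd (lt_of_lt_of_le h1.2 (h.trans h2.1)) (lt_irrefl _)
    · exact absurd (lt_of_lt_of_le h2.2 (h.trans h1.1)) (lt_irrefl _)
  have hmeas : ∀ b ∈ (Finset.univ : Finset V), MeasurableSet (S b) := by
    intro b _
    exact MeasurableSet.univ_pi fun i => measurableSet_Ico
  have hsub : (⋃ b ∈ (Finset.univ : Finset V), S b) ⊆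
      Set.univ.pi fun _ => Set.Ico (0 : ℝ) 1 := by
    intro x hx
    simp only [Set.mem_iUnion] at hx
    obtain ⟨b, _, hxb⟩ := hx
    intro i _
    have h := hxb i (Set.mem_univ i)
    simp only [Set.mem_Ico] at h ⊢
    exact ⟨le_trans (hbd b i).1 h.1, lt_of_lt_of_le h.2 (hbd b i).2⟩
  have hsum : ∑ b : V, volume (S b) ≤ 1 := by
    rw [← measure_biUnion_finset hdisj hmeas]
    calc volume (⋃ b ∈ (Finset.univ : Finset V), S b)
        ≤ volume (Set.univ.pi fun _ : Fin d => Set.Ico (0 : ℝ) 1) :=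
          measure_mono hsub
      _ = 1 := by rw [volume_pi_pi]; simp
  have : ENNReal.ofReal (∑ b : V, ∏ i, w b i) ≤ 1 := by
    rw [ENNReal.ofReal_sum_of_nonneg
      (fun b _ => Finset.prod_nonneg fun i _ => hw0 b i)]
    simpa [hvol] using hsum
  exact ENNReal.ofReal_le_one.1 this

/-- Single-bin bound: a packing of `(V, w)` into the unit cube has transformed
total volume at most 1. -/
lemma single_bin [Fintype V] {d : ℕ} {p w : V → Fin d → ℝ}
    (hw : ∀ b i, w b i ∈ Set.Icc (0 : ℝ) 1) (hpk : GoodPack p w)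
    (u : Fin d → ℝ → ℝ) (hu : ∀ i, DualFeasible (u i)) :
    ∑ b : V, ∏ i, u i (w b i) ≤ 1 := by
  obtain ⟨p', hp'⟩ := transform_all hw hpk u hu
  exact volume_bound (fun b i => ((hu i).1 _ (hw b i)).1) hp'

end BinPackingAux

/-- Bin packing bound: if the boxes `(V,w)` can be partitioned into `m` parts via
`f : V → Fin m` such that each part admits an orthogonal packing into the unit cube
`[0,1]^d`, then for all dual feasible functions `u₁, …, u_d` the ceiling of the
transformed total volume is at most `m`. -/
theorem binPacking_lowerBound {V : Type*} [Fintype V] {d m : ℕ}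
    (w : V → Fin d → ℝ) (hw : ∀ b i, w b i ∈ Set.Icc (0 : ℝ) 1)
    (f : V → Fin m)
    (hpack : ∀ j : Fin m, ∃ p : V → Fin d → ℝ,
      (∀ b, f b = j → ∀ i, 0 ≤ p b i ∧ p b i + w b i ≤ 1) ∧
      ∀ b c : V, f b = j → f c = j → b ≠ c →
        ∃ i, p b i + w b i ≤ p c i ∨ p c i + w c i ≤ p b i)
    (u : Fin d → ℝ → ℝ) (hu : ∀ i, DualFeasible (u i)) :
    ⌈∑ b, ∏ i, u i (w b i)⌉ ≤ (m : ℤ) := by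
  classical
  rw [Int.ceil_le]
  push_cast
  have key : ∀ j : Fin m,
      ∑ b ∈ Finset.univ.filter (fun b => f b = j), ∏ i, u i (w b i) ≤ 1 := by
    intro j
    obtain ⟨p, hp1, hp2⟩ := hpack j
    have hsb := BinPackingAux.single_bin (V := {b : V // f b = j})
      (p := fun b i => p b.1 i) (w := fun b i => w b.1 i)
      (fun b i => hw b.1 i)
      ⟨fun b i => hp1 b.1 b.2 i,
       fun b c hbc => hp2 b.1 c.1 b.2 c.2 fun h => hbc (Subtype.ext h)⟩
      u hu
    rwa [Finset.sum_subtype (p := fun b => f b = j)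
      (Finset.univ.filter fun b => f b = j)
      (fun b => by simp) (fun b => ∏ i, u i (w b i))]
  calc ∑ b, ∏ i, u i (w b i)
      = ∑ j : Fin m, ∑ b ∈ Finset.univ.filter (fun b => f b = j), ∏ i, u i (w b i) :=
        (Finset.sum_fiberwise Finset.univ f fun b => ∏ i, u i (w b i)).symm
    _ ≤ ∑ _j : Fin m, (1 : ℝ) := Finset.sum_le_sum fun j _ => key j
    _ = m := by simp
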